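/- Let p ≥ 7 be a prime and (x_1,...,x_k) a sequence in Z_p. If there exist c_1,...,c_k ∈ Q_p with c_1x_1+...+c_kx_k = 0 and c_1+...+c_k ≠ 0, then there exist weights d_1,...,d_k, d_{k+1}, d_{k+2} ∈ Q_p with d_1x_1+...+d_kx_k + d_{k+1}·0 + d_{k+2}·0 = 0 and d_1+...+d_{k+2} = 0; i.e., the sequence extended by two zeros is a (Q_p,1)-weighted zero-sum sequence. -/

import Mathlib

def Qp (p : ℕ) : Set (ZMod p) := {x | ∃ u : (ZMod p)ˣ, (u : ZMod p) ^ 2 = x}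

def Np (p : ℕ) : Set (ZMod p) := {x | IsUnit x ∧ x ∉ Qp p}

lemma mem_Qp_iff {p : ℕ} [Fact p.Prime] {x : ZMod p} :
    x ∈ Qp p ↔ x ≠ 0 ∧ IsSquare x := by
  constructor
  · rintro ⟨u, rfl⟩
    exact ⟨pow_ne_zero _ u.ne_zero, IsSquare.sq _⟩
  · rintro ⟨hx, y, rfl⟩
    have hy : y ≠ 0 := fun h => hx (by simp [h])
    refine ⟨(isUnit_iff_ne_zero.mpr hy).unit, ?_⟩
    rw [sq, IsUnit.unit_spec]

lemma mem_Qp_char {p : ℕ} [Fact p.Prime] {x : ZMod p} :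
    x ∈ Qp p ↔ quadraticChar (ZMod p) x = 1 := by
  rw [mem_Qp_iff]
  constructor
  · rintro ⟨hx, hs⟩
    exact (quadraticChar_one_iff_isSquare hx).mpr hs
  · intro h
    have hx : x ≠ 0 := by
      intro h0; rw [h0, quadraticChar_zero] at h; exact one_ne_zero h.symm
    exact ⟨hx, (quadraticChar_one_iff_isSquare hx).mp h⟩

lemma natCast_ne_zero_of {p n : ℕ} [Fact p.Prime] (hp : 7 ≤ p) (hn : 0 < n) (hn' : n ≤ 10)
    (hn7 : n ≠ 7) : (n : ZMod p) ≠ 0 := by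
  intro h
  rw [ZMod.natCast_eq_zero_iff] at h
  have hle := Nat.le_of_dvd hn h
  have hub : p ≤ 10 := le_trans hle hn'
  have hpp : p.Prime := Fact.out
  interval_cases p <;> first | omega | exact absurd hpp (by norm_num)

/-- Key: for any nonzero `w`, there are `a b ∈ Qp` with `a + b ≠ 0` and same char value as `w`. -/
lemma sum_two_squares {p : ℕ} [Fact p.Prime] (hp : 7 ≤ p) (w : ZMod p) (hw : w ≠ 0) :
    ∃ a b : ZMod p, a ∈ Qp p ∧ b ∈ Qp p ∧ a + b ≠ 0 ∧
      quadraticChar (ZMod p) (a + b) = quadraticChar (ZMod p) w := by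
  have h1 : (1 : ZMod p) ∈ Qp p := mem_Qp_iff.mpr ⟨one_ne_zero, IsSquare.one⟩
  have h2ne : (2 : ZMod p) ≠ 0 := by
    have := natCast_ne_zero_of (p := p) hp (n := 2) (by norm_num) (by norm_num) (by norm_num)
    simpa using this
  have h5ne : (5 : ZMod p) ≠ 0 := by
    have := natCast_ne_zero_of (p := p) hp (n := 5) (by norm_num) (by norm_num) (by norm_num)
    simpa using this
  have h10ne : (10 : ZMod p) ≠ 0 := by
    have := natCast_ne_zero_of (p := p) hp (n := 10) (by norm_num) (by norm_num) (by norm_num)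
    simpa using this
  have h9ne : (9 : ZMod p) ≠ 0 := by
    have := natCast_ne_zero_of (p := p) hp (n := 9) (by norm_num) (by norm_num) (by norm_num)
    simpa using this
  rcases quadraticChar_dichotomy hw with hχ | hχ
  · -- need a QR that is a sum of two QRs
    rw [hχ]
    by_cases h2 : (2 : ZMod p) ∈ Qp p
    · refine ⟨1, 1, h1, h1, ?_, ?_⟩ <;>
        rw [show (1 : ZMod p) + 1 = 2 from by norm_num]
      · exact h2ne
      · exact mem_Qp_char.mp h2
    · have hχ2 : quadraticChar (ZMod p) 2 = -1 := by
        rcases quadraticChar_dichotomy h2ne with h | h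
        · exact absurd (mem_Qp_char.mpr h) h2
        · exact h
      by_cases h5 : (5 : ZMod p) ∈ Qp p
      · have h4 : (4 : ZMod p) ∈ Qp p := by
          rw [mem_Qp_iff]
          refine ⟨?_, ⟨2, by norm_num⟩⟩
          rw [show (4 : ZMod p) = 2 * 2 from by norm_num]
          exact mul_ne_zero h2ne h2ne
        refine ⟨1, 4, h1, h4, ?_, ?_⟩ <;>
          rw [show (1 : ZMod p) + 4 = 5 from by norm_num]
        · exact h5ne
        · exact mem_Qp_char.mp h5
      · have hχ5 : quadraticChar (ZMod p) 5 = -1 := by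
          rcases quadraticChar_dichotomy h5ne with h | h
          · exact absurd (mem_Qp_char.mpr h) h5
          · exact h
        have h9 : (9 : ZMod p) ∈ Qp p := by
          rw [mem_Qp_iff]
          exact ⟨h9ne, ⟨3, by norm_num⟩⟩
        refine ⟨9, 1, h9, h1, ?_, ?_⟩ <;>
          rw [show (9 : ZMod p) + 1 = 10 from by norm_num]
        · exact h10ne
        · rw [show (10 : ZMod p) = 2 * 5 from by norm_num, map_mul, hχ2, hχ5]
          norm_num
  · -- need a nonresidue that is a sum of two QRs: least nonresidue argument
    rw [hχ]
    have hchar : ringChar (ZMod p) ≠ 2 := by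
      rw [ZMod.ringChar_zmod_n]; omega
    obtain ⟨z, hz⟩ := FiniteField.exists_nonsquare (F := ZMod p) hchar
    have hzne : z ≠ 0 := fun h => hz (h ▸ IsSquare.zero)
    have hP : ∃ n : ℕ, (n : ZMod p) ≠ 0 ∧ ¬IsSquare ((n : ZMod p)) := by
      refine ⟨z.val, ?_, ?_⟩ <;> rw [ZMod.natCast_val, ZMod.cast_id]
      exacts [hzne, hz]
    classical
    obtain ⟨n, ⟨hnne, hnsq⟩, hmin⟩ :
        ∃ n : ℕ, ((n : ZMod p) ≠ 0 ∧ ¬IsSquare ((n : ZMod p))) ∧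
          ∀ m < n, ¬((m : ZMod p) ≠ 0 ∧ ¬IsSquare ((m : ZMod p))) :=
      ⟨Nat.find hP, Nat.find_spec hP, fun m hm => Nat.find_min hP hm⟩
    have hn0 : n ≠ 0 := by
      intro h; apply hnne; rw [h, Nat.cast_zero]
    have hn1 : n ≠ 1 := by
      intro h; apply hnsq; rw [h, Nat.cast_one]; exact IsSquare.one
    have hn2 : 2 ≤ n := by omega
    have hmlt : n - 1 < n := by omega
    have hm := hmin (n - 1) hmlt
    push_neg at hm
    have hm1ne : ((n - 1 : ℕ) : ZMod p) ≠ 0 := by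
      intro h
      have e : ((n : ℕ) : ZMod p) = 1 := by
        have e2 : (n : ℕ) = (n - 1) + 1 := by omega
        rw [e2, Nat.cast_add, h, Nat.cast_one, zero_add]
      exact hnsq (e ▸ IsSquare.one)
    have hmsq : ((n - 1 : ℕ) : ZMod p) ∈ Qp p := mem_Qp_iff.mpr ⟨hm1ne, hm hm1ne⟩
    have e : ((n - 1 : ℕ) : ZMod p) + 1 = (n : ZMod p) := by
      have e2 : (n : ℕ) = (n - 1) + 1 := by omega
      rw [e2]; push_cast; ring
    refine ⟨((n - 1 : ℕ) : ZMod p), 1, hmsq, h1, ?_, ?_⟩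
    · rw [e]; exact hnne
    · rw [e]; exact quadraticChar_neg_one_iff_not_isSquare.mpr hnsq

theorem stmt_3 (p : ℕ) [Fact p.Prime] (hp : 7 ≤ p) (k : ℕ) (x : Fin k → ZMod p)
    (c : Fin k → ZMod p) (hc : ∀ i, c i ∈ Qp p)
    (h1 : ∑ i, c i * x i = 0) (h2 : ∑ i, c i ≠ 0) :
    ∃ d : Fin k → ZMod p, ∃ d₁ d₂ : ZMod p,
      (∀ i, d i ∈ Qp p) ∧ d₁ ∈ Qp p ∧ d₂ ∈ Qp p ∧
      (∑ i, d i * x i) + d₁ * 0 + d₂ * 0 = 0 ∧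
      (∑ i, d i) + d₁ + d₂ = 0 := by
  set s := ∑ i, c i with hs
  have hns : (-s) ≠ 0 := neg_ne_zero.mpr h2
  obtain ⟨a, b, ha, hb, habne, hχ⟩ := sum_two_squares hp (-s) hns
  set t := (a + b) * (-s)⁻¹ with ht
  have htQ : t ∈ Qp p := by
    rw [mem_Qp_char, ht, map_mul]
    have hmul : quadraticChar (ZMod p) (-s) * quadraticChar (ZMod p) (-s)⁻¹ = 1 := by
      rw [← map_mul, mul_inv_cancel₀ hns, map_one]
    rw [hχ]
    linarith [hmul]
  refine ⟨fun i => t * c i, a, b, ?_, ha, hb, ?_, ?_⟩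
  · intro i
    rw [mem_Qp_char, map_mul, mem_Qp_char.mp htQ, mem_Qp_char.mp (hc i), mul_one]
  · have e : ∑ i, t * c i * x i = t * ∑ i, c i * x i := by
      rw [Finset.mul_sum]; congr 1; ext i; ring
    rw [e, h1, mul_zero, mul_zero, mul_zero, add_zero, add_zero]
  · have hsum : ∑ i, t * c i = t * s := by rw [Finset.mul_sum]
    rw [hsum, ht]
    field_simp
    ring
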